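/- Let ζ = (s 0)² / ∑_{i < r} (s i)². If 0 < h < ζ and α* ∈ (0, (s 0)²/2) is a minimizer of T_h over [0, (s 0)²/2], then α* ≤ (1 − (h/ζ)^(1/3))⁻¹ · (s 0)² · (h/ζ)^(1/3). -/

import Mathlib

/-- The PRO function `T_h(α) = f₁(α) + h·f₂(α)` for Tikhonov regularization. -/
noncomputable def proT (r : ℕ) (hr : 0 < r) (s : Fin r → ℝ) (h : ℝ) (α : ℝ) : ℝ :=
  α ^ 2 / (α + (s ⟨0, hr⟩) ^ 2) ^ 2 + h * ∑ i, (s i) ^ 4 / (α + (s i) ^ 2) ^ 2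

private lemma aux_hasDerivAt_const_div (k c a : ℝ) (hne : a + c ≠ 0) :
    HasDerivAt (fun x : ℝ => k / (x + c) ^ 2) (-(2 * k) / (a + c) ^ 3) a := by
  have hg : HasDerivAt (fun x : ℝ => (x + c) ^ 2) (2 * (a + c)) a := by
    have := ((hasDerivAt_id a).add_const c).fun_pow 2
    simpa using this
  have := (hasDerivAt_const a k).fun_div hg (pow_ne_zero 2 hne)
  refine this.congr_deriv ?_
  field_simp
  ring

private lemma aux_hasDerivAt_main (c a : ℝ) (hne : a + c ≠ 0) :
    HasDerivAt (fun x : ℝ => x ^ 2 / (x + c) ^ 2) (2 * a * c / (a + c) ^ 3) a := by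
  have hg : HasDerivAt (fun x : ℝ => (x + c) ^ 2) (2 * (a + c)) a := by
    have := ((hasDerivAt_id a).add_const c).fun_pow 2
    simpa using this
  have hf : HasDerivAt (fun x : ℝ => x ^ 2) (2 * a) a := by
    simpa using hasDerivAt_pow 2 a
  have := hf.fun_div hg (pow_ne_zero 2 hne)
  refine this.congr_deriv ?_
  field_simp
  ring

/-- With `ζ = (s 0)² / ∑_{i<r} (s i)²`, if `0 < h < ζ` and
`α* ∈ (0, (s 0)²/2)` is a minimizer of `T_h` over `[0, (s 0)²/2]`, then
`α* ≤ (1 − (h/ζ)^{1/3})⁻¹ · (s 0)² · (h/ζ)^{1/3}`. -/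
theorem proT_minimizer_upper_bound (r : ℕ) (hr : 0 < r) (s : Fin r → ℝ)
    (hpos : ∀ i, 0 < s i) (hmax : ∀ i, s i ≤ s ⟨0, hr⟩)
    (ζ : ℝ) (hζ : ζ = (s ⟨0, hr⟩) ^ 2 / ∑ i, (s i) ^ 2)
    (h : ℝ) (hh : 0 < h) (hhζ : h < ζ)
    (a : ℝ) (ha : a ∈ Set.Ioo (0 : ℝ) ((s ⟨0, hr⟩) ^ 2 / 2))
    (hamin : IsMinOn (proT r hr s h) (Set.Icc 0 ((s ⟨0, hr⟩) ^ 2 / 2)) a) :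
    a ≤ (1 - (h / ζ) ^ ((1 : ℝ) / 3))⁻¹ * (s ⟨0, hr⟩) ^ 2 * (h / ζ) ^ ((1 : ℝ) / 3) := by
  obtain ⟨ha0, ha1⟩ := ha
  set σ : ℝ := (s ⟨0, hr⟩) ^ 2 with hσdef
  have hσ0 : 0 < σ := pow_pos (hpos _) 2
  have hS0 : 0 < ∑ i, (s i) ^ 2 :=
    Finset.sum_pos (fun i _ => pow_pos (hpos i) 2) ⟨⟨0, hr⟩, Finset.mem_univ _⟩
  have hζ0 : 0 < ζ := by rw [hζ]; positivity
  have haσ : (0 : ℝ) < a + σ := by linarith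
  -- derivative of proT at a
  have hci : ∀ i : Fin r, (0 : ℝ) < a + (s i) ^ 2 := by
    intro i; have := pow_pos (hpos i) 2; linarith
  have hd : HasDerivAt (proT r hr s h)
      (2 * a * σ / (a + σ) ^ 3 + h * ∑ i, (-(2 * (s i) ^ 4) / (a + (s i) ^ 2) ^ 3)) a := by
    have h1 := aux_hasDerivAt_main σ a haσ.ne'
    have h2 : HasDerivAt (fun x : ℝ => ∑ i, (s i) ^ 4 / (x + (s i) ^ 2) ^ 2)
        (∑ i, (-(2 * (s i) ^ 4) / (a + (s i) ^ 2) ^ 3)) a := by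
      apply HasDerivAt.fun_sum
      intro i _
      exact aux_hasDerivAt_const_div ((s i) ^ 4) ((s i) ^ 2) a (hci i).ne'
    exact h1.add (h2.const_mul h)
  -- derivative vanishes at interior minimum
  have hloc : IsLocalMin (proT r hr s h) a :=
    hamin.isLocalMin (Icc_mem_nhds ha0 ha1)
  have hD0 := hloc.hasDerivAt_eq_zero hd
  -- stationarity:
  have hstat : 2 * a * σ / (a + σ) ^ 3 = h * ∑ i, 2 * (s i) ^ 4 / (a + (s i) ^ 2) ^ 3 := by
    have : ∑ i, (-(2 * (s i) ^ 4) / (a + (s i) ^ 2) ^ 3)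
        = -∑ i, 2 * (s i) ^ 4 / (a + (s i) ^ 2) ^ 3 := by
      rw [← Finset.sum_neg_distrib]
      congr 1; funext i; ring
    rw [this] at hD0
    linarith
  -- key bound: a^3 * σ ≤ h * S * (a+σ)^3
  have hterm : ∀ i : Fin r, a ^ 2 * (2 * (s i) ^ 4 / (a + (s i) ^ 2) ^ 3) ≤ 2 * (s i) ^ 2 := by
    intro i
    have hc := pow_pos (hpos i) 2
    have hd3 : (0 : ℝ) < (a + (s i) ^ 2) ^ 3 := pow_pos (hci i) 3
    rw [mul_div_assoc' , div_le_iff₀ hd3]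
    nlinarith [sq_nonneg (a - (s i) ^ 2), sq_nonneg (s i), mul_pos ha0 hc,
      mul_pos (mul_pos ha0 ha0) hc, mul_pos hc (mul_pos hc hc)]
  have hkey : a ^ 3 * σ / (a + σ) ^ 3 ≤ h * ∑ i, (s i) ^ 2 := by
    have e1 : a ^ 3 * σ / (a + σ) ^ 3 = (a ^ 2 / 2) * (2 * a * σ / (a + σ) ^ 3) := by
      field_simp
    rw [e1, hstat]
    have e2 : a ^ 2 / 2 * (h * ∑ i, 2 * (s i) ^ 4 / (a + (s i) ^ 2) ^ 3)
        = (h / 2) * ∑ i, a ^ 2 * (2 * (s i) ^ 4 / (a + (s i) ^ 2) ^ 3) := by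
      simp only [Finset.mul_sum]
      exact Finset.sum_congr rfl fun i _ => by ring
    rw [e2]
    calc (h / 2) * ∑ i, a ^ 2 * (2 * (s i) ^ 4 / (a + (s i) ^ 2) ^ 3)
        ≤ (h / 2) * ∑ i, 2 * (s i) ^ 2 := by
          apply mul_le_mul_of_nonneg_left _ (by linarith)
          exact Finset.sum_le_sum fun i _ => hterm i
      _ = h * ∑ i, (s i) ^ 2 := by rw [Finset.mul_sum, Finset.mul_sum]; ring_nf
  -- a^3 ≤ (h/ζ) * (a+σ)^3
  have hhz : h / ζ = h * (∑ i, (s i) ^ 2) / σ := by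
    rw [hζ]; field_simp
  have hcube : a ^ 3 ≤ (h / ζ) * (a + σ) ^ 3 := by
    rw [hhz]
    rw [div_le_iff₀ (pow_pos haσ 3)] at hkey
    rw [div_mul_eq_mul_div, le_div_iff₀ hσ0]
    nlinarith
  set t : ℝ := (h / ζ) ^ ((1 : ℝ) / 3) with htdef
  have hx0 : (0 : ℝ) < h / ζ := div_pos hh hζ0
  have hx1 : h / ζ < 1 := (div_lt_one hζ0).mpr hhζ
  have ht0 : 0 ≤ t := Real.rpow_nonneg hx0.le _
  have ht3 : t ^ 3 = h / ζ := by
    rw [htdef, ← Real.rpow_natCast ((h / ζ) ^ ((1:ℝ)/3)) 3, ← Real.rpow_mul hx0.le]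
    norm_num
  have ht1 : t < 1 := Real.rpow_lt_one hx0.le hx1 (by norm_num)
  have hat : a ≤ t * (a + σ) := by
    have h3 : a ^ 3 ≤ (t * (a + σ)) ^ 3 := by
      rw [mul_pow, ht3]; exact hcube
    have := pow_le_pow_iff_left₀ ha0.le (mul_nonneg ht0 haσ.le) (by norm_num : (3:ℕ) ≠ 0)
    exact this.mp h3
  have h1t : (0 : ℝ) < 1 - t := by linarith
  have hgoal : (1 - t)⁻¹ * σ * t = σ * t / (1 - t) := by ring
  rw [hgoal, le_div_iff₀ h1t]
  nlinarith
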